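/- Let u₁, u₂, p₁, p₂ ∈ ℝ with u₁ ≠ u₂, u₁ ≠ 0, u₂ ≠ 0 and p₁u₂ − p₂u₁ ≠ 0, and define b₁ = (p₁u₂ − p₂u₁)/(u₁u₂(u₁−u₂)), b₀ = −(p₁u₂² − p₂u₁²)/(u₁u₂(u₁−u₂)). Let v₁, v₂ be the two roots of x² + S·x + P = 0 with S = (u₁−u₂)(p₁²u₂² − p₂²u₁² − (u₁−u₂)u₁²u₂²)/(p₁u₂ − p₂u₁)² and P = u₁u₂(u₁−u₂)(p₁²u₂ − p₂²u₁ − u₁³u₂ + u₁u₂³)/(p₁u₂ − p₂u₁)², and assume v₁ ≠ v₂. Set π_j = −v_j(b₁v_j + b₀) for j = 1, 2. Then the map ρ : (u₁,u₂,p₁,p₂) ↦ (v₁,v₂,π₁,π₂) preserves the form of the integrals of motion: a(v₁,v₂,π₁,π₂) = a(u₁,u₂,p₁,p₂) and b(v₁,v₂,π₁,π₂) = b(u₁,u₂,p₁,p₂), where a(x₁,x₂,y₁,y₂) = y₁²/(x₁−x₂) + y₂²/(x₂−x₁) − x₁² − x₁x₂ − x₂² and b(x₁,x₂,y₁,y₂)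 = x₂y₁²/(x₂−x₁) + x₁y₂²/(x₁−x₂) + (x₁+x₂)x₁x₂. -/

import Mathlib

/-- Integral of motion `a` as a function of the four coordinates. -/
noncomputable def aFun (x₁ x₂ y₁ y₂ : ℝ) : ℝ :=
  y₁ ^ 2 / (x₁ - x₂) + y₂ ^ 2 / (x₂ - x₁) - x₁ ^ 2 - x₁ * x₂ - x₂ ^ 2

/-- Integral of motion `b` as a function of the four coordinates. -/
noncomputable def bFun (x₁ x₂ y₁ y₂ : ℝ) : ℝ :=
  x₂ * y₁ ^ 2 / (x₂ - x₁) + x₁ * y₂ ^ 2 / (x₁ - x₂) + (x₁ + x₂) * x₁ * x₂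

/-- If two points with distinct abscissas lie on the Weierstrass cubic
`y² = x³ + a·x + b`, then `aFun` and `bFun` recover `a` and `b`. -/
lemma onCurve_aux (a b x₁ x₂ y₁ y₂ : ℝ) (hx : x₁ - x₂ ≠ 0)
    (e1 : y₁ ^ 2 = x₁ ^ 3 + a * x₁ + b) (e2 : y₂ ^ 2 = x₂ ^ 3 + a * x₂ + b) :
    aFun x₁ x₂ y₁ y₂ = a ∧ bFun x₁ x₂ y₁ y₂ = b := by
  have hx' : x₂ - x₁ ≠ 0 := fun hc => hx (by linarith)
  unfold aFun bFun
  rw [e1, e2]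
  constructor <;> field_simp <;> ring

/-- Each root of the residual quadratic, mapped to the parabola, lies on the
cubic with `a = aFun u₁ u₂ p₁ p₂` and `b = bFun u₁ u₂ p₁ p₂`. -/
lemma root_onCurve (u₁ u₂ p₁ p₂ v : ℝ) (h : u₁ - u₂ ≠ 0) (h₁ : u₁ ≠ 0) (h₂ : u₂ ≠ 0)
    (hD : p₁ * u₂ - p₂ * u₁ ≠ 0)
    (hv : v ^ 2 + ((u₁ - u₂) * (p₁ ^ 2 * u₂ ^ 2 - p₂ ^ 2 * u₁ ^ 2
        - (u₁ - u₂) * u₁ ^ 2 * u₂ ^ 2) / (p₁ * u₂ - p₂ * u₁) ^ 2) * v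
      + u₁ * u₂ * (u₁ - u₂) * (p₁ ^ 2 * u₂ - p₂ ^ 2 * u₁
        - u₁ ^ 3 * u₂ + u₁ * u₂ ^ 3) / (p₁ * u₂ - p₂ * u₁) ^ 2 = 0) :
    (-v * ((p₁ * u₂ - p₂ * u₁) / (u₁ * u₂ * (u₁ - u₂)) * v
      + -(p₁ * u₂ ^ 2 - p₂ * u₁ ^ 2) / (u₁ * u₂ * (u₁ - u₂)))) ^ 2
      = v ^ 3 + aFun u₁ u₂ p₁ p₂ * v + bFun u₁ u₂ p₁ p₂ := by
  have h' : u₂ - u₁ ≠ 0 := fun hc => h (by linarith)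
  have E : v ^ 2 * (p₁ * u₂ - p₂ * u₁) ^ 2
      + (u₁ - u₂) * (p₁ ^ 2 * u₂ ^ 2 - p₂ ^ 2 * u₁ ^ 2
        - (u₁ - u₂) * u₁ ^ 2 * u₂ ^ 2) * v
      + u₁ * u₂ * (u₁ - u₂) * (p₁ ^ 2 * u₂ - p₂ ^ 2 * u₁
        - u₁ ^ 3 * u₂ + u₁ * u₂ ^ 3) = 0 := by
    have hD' : u₂ * p₁ - u₁ * p₂ ≠ 0 := fun hc => hD (by linarith)
    field_simp at hv
    linear_combination hv
  have key : (-v * ((p₁ * u₂ - p₂ * u₁) / (u₁ * u₂ * (u₁ - u₂)) * v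
      + -(p₁ * u₂ ^ 2 - p₂ * u₁ ^ 2) / (u₁ * u₂ * (u₁ - u₂)))) ^ 2
      - (v ^ 3 + aFun u₁ u₂ p₁ p₂ * v + bFun u₁ u₂ p₁ p₂)
      = (v - u₁) * (v - u₂) *
        (v ^ 2 * (p₁ * u₂ - p₂ * u₁) ^ 2
          + (u₁ - u₂) * (p₁ ^ 2 * u₂ ^ 2 - p₂ ^ 2 * u₁ ^ 2
            - (u₁ - u₂) * u₁ ^ 2 * u₂ ^ 2) * v
          + u₁ * u₂ * (u₁ - u₂) * (p₁ ^ 2 * u₂ - p₂ ^ 2 * u₁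
            - u₁ ^ 3 * u₂ + u₁ * u₂ ^ 3)) / (u₁ * u₂ * (u₁ - u₂)) ^ 2 := by
    unfold aFun bFun
    field_simp
    ring
  rw [E] at key
  linear_combination key

/-- The discrete map `ρ : (u₁,u₂,p₁,p₂) ↦ (v₁,v₂,π₁,π₂)`, sending the pair of
intersection points of the cubic with the parabola through the origin to the
other pair of intersection points, preserves the form of the integrals of
motion `a` and `b`. -/
theorem rho_preserves_integrals (u₁ u₂ p₁ p₂ v₁ v₂ : ℝ)
    (h : u₁ ≠ u₂) (h₁ : u₁ ≠ 0) (h₂ : u₂ ≠ 0) (hD : p₁ * u₂ - p₂ * u₁ ≠ 0)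
    (hS : v₁ ≠ v₂)
    (hv₁ : v₁ ^ 2 + ((u₁ - u₂) * (p₁ ^ 2 * u₂ ^ 2 - p₂ ^ 2 * u₁ ^ 2
        - (u₁ - u₂) * u₁ ^ 2 * u₂ ^ 2) / (p₁ * u₂ - p₂ * u₁) ^ 2) * v₁
      + u₁ * u₂ * (u₁ - u₂) * (p₁ ^ 2 * u₂ - p₂ ^ 2 * u₁
        - u₁ ^ 3 * u₂ + u₁ * u₂ ^ 3) / (p₁ * u₂ - p₂ * u₁) ^ 2 = 0)
    (hv₂ : v₂ ^ 2 + ((u₁ - u₂) * (p₁ ^ 2 * u₂ ^ 2 - p₂ ^ 2 * u₁ ^ 2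
        - (u₁ - u₂) * u₁ ^ 2 * u₂ ^ 2) / (p₁ * u₂ - p₂ * u₁) ^ 2) * v₂
      + u₁ * u₂ * (u₁ - u₂) * (p₁ ^ 2 * u₂ - p₂ ^ 2 * u₁
        - u₁ ^ 3 * u₂ + u₁ * u₂ ^ 3) / (p₁ * u₂ - p₂ * u₁) ^ 2 = 0) :
    let b₁ := (p₁ * u₂ - p₂ * u₁) / (u₁ * u₂ * (u₁ - u₂))
    let b₀ := -(p₁ * u₂ ^ 2 - p₂ * u₁ ^ 2) / (u₁ * u₂ * (u₁ - u₂))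
    let π₁ := -v₁ * (b₁ * v₁ + b₀)
    let π₂ := -v₂ * (b₁ * v₂ + b₀)
    aFun v₁ v₂ π₁ π₂ = aFun u₁ u₂ p₁ p₂ ∧
    bFun v₁ v₂ π₁ π₂ = bFun u₁ u₂ p₁ p₂ := by
  intro b₁ b₀ π₁ π₂
  have hu : u₁ - u₂ ≠ 0 := sub_ne_zero.mpr h
  have hv : v₁ - v₂ ≠ 0 := sub_ne_zero.mpr hS
  exact onCurve_aux _ _ v₁ v₂ π₁ π₂ hv
    (root_onCurve u₁ u₂ p₁ p₂ v₁ hu h₁ h₂ hD hv₁)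
    (root_onCurve u₁ u₂ p₁ p₂ v₂ hu h₁ h₂ hD hv₂)
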